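/- Let φ: [0,1] → ℝ be nonnegative, nonincreasing, with ∫_0^1 φ = 1, and suppose φ is piecewise constant with jumps at points 0 < p_1 < ... < p_J < 1 of sizes Δφ_k = φ(p_k^+) - φ(p_k^-) ≤ 0, and value φ(1) on the last piece. Then for every integrable random variable X, M_φ(X) = inf over (ψ_1,...,ψ_J) ∈ ℝ^J of ∑_{k=1}^J Δφ_k·( p_k·ψ_k - E[max(ψ_k - X, 0)] ) - φ(1)·E[X]. -/

import Mathlib

open MeasureTheory Finset

open ProbabilityTheory Filter in
lemma quantile_aux {ν : Measure ℝ} [IsProbabilityMeasure ν] {p : ℝ} (hp0 : 0 < p) (hp1 : p < 1) :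
    {x | p ≤ cdf ν x}.Nonempty ∧ BddBelow {x | p ≤ cdf ν x} := by
  constructor
  · exact ((tendsto_cdf_atTop ν).eventually (eventually_ge_nhds hp1)).exists
  · obtain ⟨x0, hx0⟩ := ((tendsto_cdf_atBot ν).eventually (eventually_lt_nhds hp0)).exists
    exact ⟨x0, fun s hs => le_of_not_gt fun h =>
      absurd hs (not_le.2 (lt_of_le_of_lt (monotone_cdf ν h.le) hx0))⟩

open ProbabilityTheory Filter Topology in
lemma quantile_galois {ν : Measure ℝ} [IsProbabilityMeasure ν] {p t : ℝ}
    (hp0 : 0 < p) (hp1 : p < 1) :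
    sInf {x | p ≤ cdf ν x} ≤ t ↔ p ≤ cdf ν t := by
  obtain ⟨hne, hbdd⟩ := quantile_aux (ν := ν) hp0 hp1
  constructor
  · intro h
    have hs : ∀ s ∈ Set.Ioi t, p ≤ cdf ν s := by
      intro s hs
      obtain ⟨u, hu, hus⟩ := exists_lt_of_csInf_lt hne (lt_of_le_of_lt h hs)
      exact le_trans hu (monotone_cdf ν hus.le)
    have hrc : Tendsto (cdf ν) (𝓝[>] t) (𝓝 (cdf ν t)) :=
      ((cdf ν).right_continuous t).tendsto.mono_left (nhdsWithin_mono t Set.Ioi_subset_Ici_self)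
    exact ge_of_tendsto hrc (eventually_nhdsWithin_of_forall hs)
  · intro h; exact csInf_le hbdd h

open ProbabilityTheory in
lemma quantile_mono {ν : Measure ℝ} [IsProbabilityMeasure ν] {p p' : ℝ}
    (hp0 : 0 < p) (hpp : p ≤ p') (hp1 : p' < 1) :
    sInf {x | p ≤ cdf ν x} ≤ sInf {x | p' ≤ cdf ν x} :=
  csInf_le_csInf (quantile_aux hp0 (lt_of_le_of_lt hpp hp1)).2
    (quantile_aux (lt_of_lt_of_le hp0 hpp) hp1).1
    (fun x hx => le_trans hpp hx)

open ProbabilityTheory in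
lemma quantile_map {ν : Measure ℝ} [IsProbabilityMeasure ν] {q : ℝ → ℝ}
    (hq : ∀ p, q p = sInf {x | p ≤ cdf ν x}) :
    ∃ g : ℝ → ℝ, Measurable g ∧ (∀ p ∈ Set.Ioo (0:ℝ) 1, g p = q p) ∧
      (volume.restrict (Set.Ioo (0:ℝ) 1)).map g = ν := by
  classical
  set g : ℝ → ℝ := fun p => if p ∈ Set.Ioo (0:ℝ) 1 then q p else 0 with hg
  have hgal : ∀ p ∈ Set.Ioo (0:ℝ) 1, ∀ t, (q p ≤ t ↔ p ≤ cdf ν t) := by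
    intro p hp t
    rw [hq]
    exact quantile_galois hp.1 hp.2
  have hmeas : Measurable g := by
    apply measurable_of_Iic
    intro t
    have hset : g ⁻¹' Set.Iic t =
        (Set.Ioo (0:ℝ) 1 ∩ Set.Iic (cdf ν t)) ∪ ((Set.Ioo (0:ℝ) 1)ᶜ ∩ (if (0:ℝ) ≤ t then Set.univ else ∅)) := by
      ext x
      by_cases hx : x ∈ Set.Ioo (0:ℝ) 1
      · simp only [Set.mem_preimage, Set.mem_Iic, hg, if_pos hx, Set.mem_union, Set.mem_inter_iff, hx,
          Set.mem_compl_iff, not_true_eq_false, false_and, or_false, true_and]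
        exact hgal x hx t
      · simp only [Set.mem_preimage, Set.mem_Iic, hg, if_neg hx, Set.mem_union, Set.mem_inter_iff, hx,
          Set.mem_compl_iff, not_false_eq_true, true_and, false_and, false_or]
        by_cases h0 : (0:ℝ) ≤ t <;> simp [h0]
    rw [hset]
    refine (measurableSet_Ioo.inter measurableSet_Iic).union (measurableSet_Ioo.compl.inter ?_)
    split <;> simp
  refine ⟨g, hmeas, fun p hp => if_pos hp, ?_⟩
  haveI : IsFiniteMeasure ((volume.restrict (Set.Ioo (0:ℝ) 1)).map g) :=
    ⟨by rw [Measure.map_apply hmeas MeasurableSet.univ]; simp⟩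
  refine Measure.ext_of_Iic _ _ (fun t => ?_)
  rw [Measure.map_apply hmeas measurableSet_Iic,
    Measure.restrict_apply (hmeas measurableSet_Iic)]
  have hsub : g ⁻¹' Set.Iic t ∩ Set.Ioo 0 1 = Set.Ioo (0:ℝ) 1 ∩ Set.Iic (cdf ν t) := by
    ext x
    constructor
    · rintro ⟨hgx, hx⟩
      refine ⟨hx, ?_⟩
      rw [Set.mem_preimage, Set.mem_Iic, hg] at hgx
      simp only [if_pos hx] at hgx
      exact (hgal x hx t).mp hgx
    · rintro ⟨hx, hcx⟩
      refine ⟨?_, hx⟩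
      rw [Set.mem_preimage, Set.mem_Iic, hg]
      simp only [if_pos hx]
      exact (hgal x hx t).mpr hcx
  rw [hsub, ← ofReal_cdf ν t]
  have h0 : 0 ≤ cdf ν t := cdf_nonneg ν t
  have h1 : cdf ν t ≤ 1 := cdf_le_one ν t
  rcases lt_or_eq_of_le h1 with h1 | h1
  · have : Set.Ioo (0:ℝ) 1 ∩ Set.Iic (cdf ν t) = Set.Ioc 0 (cdf ν t) := by
      ext x
      simp only [Set.mem_inter_iff, Set.mem_Ioo, Set.mem_Iic, Set.mem_Ioc]
      exact ⟨fun ⟨⟨a, _⟩, c⟩ => ⟨a, c⟩, fun ⟨a, c⟩ => ⟨⟨a, lt_of_le_of_lt c h1⟩, c⟩⟩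
    rw [this, Real.volume_Ioc, sub_zero]
  · have : Set.Ioo (0:ℝ) 1 ∩ Set.Iic (cdf ν t) = Set.Ioo 0 1 := by
      rw [h1]
      refine Set.inter_eq_left.mpr (fun x hx => ?_)
      exact le_of_lt (Set.mem_Ioo.mp hx).2
    rw [this, Real.volume_Ioo, h1, sub_zero]
theorem stmt_15 {Ω : Type*} [MeasurableSpace Ω] (μ : Measure Ω) [IsProbabilityMeasure μ]
    (X : Ω → ℝ) (hX : Integrable X μ)
    (q : ℝ → ℝ) (hq : ∀ p', q p' = sInf {x | p' ≤ (μ {ω | X ω ≤ x}).toReal})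
    (φ : ℝ → ℝ)
    (hφpos : ∀ p' ∈ Set.Icc (0 : ℝ) 1, 0 ≤ φ p') (hφmono : AntitoneOn φ (Set.Icc 0 1))
    (hφint : ∫ p' in (0 : ℝ)..1, φ p' = 1)
    (J : ℕ) (p : Fin J → ℝ) (hpmono : StrictMono p) (hp : ∀ k, p k ∈ Set.Ioo (0 : ℝ) 1)
    (Δ : Fin J → ℝ) (hΔneg : ∀ k, Δ k ≤ 0)
    (hpc : ∀ x ∈ Set.Icc (0 : ℝ) 1,
      φ x = φ 1 - ∑ k ∈ univ.filter (fun k : Fin J => x < p k), Δ k) :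
    IsGLB
      (Set.range fun ψ : Fin J → ℝ =>
        (∑ k, Δ k * (p k * ψ k - ∫ ω, max (ψ k - X ω) 0 ∂μ)) - φ 1 * ∫ ω, X ω ∂μ)
      (-∫ p' in (0 : ℝ)..1, φ p' * q p') := by
  classical
  obtain ⟨X', hX'sm, hXX'⟩ : ∃ X' : Ω → ℝ, StronglyMeasurable X' ∧ X =ᵐ[μ] X' :=
    ⟨hX.aestronglyMeasurable.mk X, hX.aestronglyMeasurable.stronglyMeasurable_mk,
      hX.aestronglyMeasurable.ae_eq_mk⟩
  have hX'meas : Measurable X' := hX'sm.measurable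
  set ν : Measure ℝ := μ.map X' with hν
  haveI : IsProbabilityMeasure ν := Measure.isProbabilityMeasure_map hX'meas.aemeasurable
  have hX'int : Integrable X' μ := hX.congr hXX'
  -- identify the cdf
  have hcdf : ∀ x : ℝ, (μ {ω | X ω ≤ x}).toReal = ProbabilityTheory.cdf ν x := by
    intro x
    rw [ProbabilityTheory.cdf_eq_real, measureReal_def, hν, Measure.map_apply hX'meas measurableSet_Iic]
    congr 1
    apply measure_congr
    rw [Filter.eventuallyEq_set]
    filter_upwards [hXX'] with ω hω
    simp only [Set.mem_setOf_eq, Set.mem_preimage, Set.mem_Iic, hω]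
  have hq' : ∀ p', q p' = sInf {x | p' ≤ ProbabilityTheory.cdf ν x} := by
    intro p'
    rw [hq]
    congr 1
    ext x
    simp only [Set.mem_setOf_eq, hcdf]
  obtain ⟨g, hgmeas, hgq, hgmap⟩ := quantile_map (ν := ν) hq'
  have hqg : q =ᵐ[volume.restrict (Set.Ioo (0:ℝ) 1)] g := by
    filter_upwards [ae_restrict_mem measurableSet_Ioo] with p' hp'
    exact (hgq p' hp').symm
  have hqae : AEMeasurable q (volume.restrict (Set.Ioo (0:ℝ) 1)) :=
    hgmeas.aemeasurable.congr hqg.symm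
  have hmapq : (volume.restrict (Set.Ioo (0:ℝ) 1)).map q = ν := by
    rw [Measure.map_congr hqg, hgmap]
  -- integrability of q on (0,1)
  have hidint : Integrable (id : ℝ → ℝ) ν := by
    rw [hν, integrable_map_measure aestronglyMeasurable_id hX'meas.aemeasurable]
    exact hX'int
  have hqint : Integrable q (volume.restrict (Set.Ioo (0:ℝ) 1)) := by
    have h := hidint
    rw [← hmapq, integrable_map_measure aestronglyMeasurable_id hqae] at h
    exact h
  -- transfer of integrals
  have hTrans : ∀ f : ℝ → ℝ, Continuous f →
      ∫ ω, f (X ω) ∂μ = ∫ p' in Set.Ioo (0:ℝ) 1, f (q p') := by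
    intro f hf
    have h1 : ∫ ω, f (X ω) ∂μ = ∫ ω, f (X' ω) ∂μ :=
      integral_congr_ae (hXX'.mono fun ω hω => by simp only [hω])
    have h2 : ∫ y, f y ∂ν = ∫ ω, f (X' ω) ∂μ := by
      rw [hν]
      exact integral_map hX'meas.aemeasurable hf.aestronglyMeasurable
    have h3 : ∫ y, f y ∂ν = ∫ p' in Set.Ioo (0:ℝ) 1, f (q p') := by
      rw [← hmapq]
      exact integral_map hqae hf.aestronglyMeasurable
    rw [h1, ← h2, h3]
  have hEX : ∫ ω, X ω ∂μ = ∫ p' in Set.Ioo (0:ℝ) 1, q p' := hTrans id continuous_id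
  have hEmax : ∀ c : ℝ, ∫ ω, max (c - X ω) 0 ∂μ = ∫ p' in Set.Ioo (0:ℝ) 1, max (c - q p') 0 :=
    fun c => hTrans (fun x => max (c - x) 0)
      ((continuous_const.sub continuous_id).max continuous_const)
  -- monotonicity of q
  have hqmono : ∀ a ∈ Set.Ioo (0:ℝ) 1, ∀ b ∈ Set.Ioo (0:ℝ) 1, a ≤ b → q a ≤ q b := by
    intro a ha b hb hab
    rw [hq' a, hq' b]
    exact quantile_mono ha.1 hab hb.2
  have hIk : ∀ k : Fin J, Set.Ioo (0:ℝ) (p k) ⊆ Set.Ioo (0:ℝ) 1 :=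
    fun k => Set.Ioo_subset_Ioo le_rfl (hp k).2.le
  have hqIk : ∀ k : Fin J, Integrable q (volume.restrict (Set.Ioo (0:ℝ) (p k))) :=
    fun k => hqint.mono_measure (Measure.restrict_mono (hIk k) le_rfl)
  have hconstk : ∀ (k : Fin J) (c : ℝ), ∫ _ in Set.Ioo (0:ℝ) (p k), c = p k * c := by
    intro k c
    rw [setIntegral_const]
    rw [Real.volume_real_Ioo_of_le (hp k).1.le, sub_zero, smul_eq_mul]
  -- the key inequality
  have hkey : ∀ (k : Fin J) (c : ℝ),
      p k * c - ∫ ω, max (c - X ω) 0 ∂μ ≤ ∫ p' in Set.Ioo (0:ℝ) (p k), q p' := by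
    intro k c
    rw [hEmax c]
    have hmaxint : Integrable (fun p' => max (c - q p') 0)
        (volume.restrict (Set.Ioo (0:ℝ) 1)) := ((integrable_const c).sub hqint).pos_part
    have h1 : ∫ p' in Set.Ioo (0:ℝ) (p k), (c - q p') ≤
        ∫ p' in Set.Ioo (0:ℝ) (p k), max (c - q p') 0 :=
      integral_mono ((integrable_const c).sub (hqIk k))
        (hmaxint.mono_measure (Measure.restrict_mono (hIk k) le_rfl))
        fun p' => le_max_left _ _
    have h2 : ∫ p' in Set.Ioo (0:ℝ) (p k), max (c - q p') 0 ≤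
        ∫ p' in Set.Ioo (0:ℝ) 1, max (c - q p') 0 :=
      setIntegral_mono_set hmaxint (ae_of_all _ fun p' => le_max_right _ _)
        (HasSubset.Subset.eventuallyLE (hIk k))
    have h3 : ∫ p' in Set.Ioo (0:ℝ) (p k), (c - q p') =
        p k * c - ∫ p' in Set.Ioo (0:ℝ) (p k), q p' := by
      rw [integral_sub (integrable_const c) (hqIk k), hconstk k c]
    linarith
  -- the equality at the optimum
  have heq : ∀ k : Fin J,
      p k * q (p k) - ∫ ω, max (q (p k) - X ω) 0 ∂μ = ∫ p' in Set.Ioo (0:ℝ) (p k), q p' := by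
    intro k
    rw [hEmax]
    have hsplit : Set.Ioo (0:ℝ) 1 = Set.Ioo 0 (p k) ∪ Set.Ico (p k) 1 := by
      ext x
      simp only [Set.mem_Ioo, Set.mem_Ico, Set.mem_union]
      constructor
      · rintro ⟨h0, h1⟩
        rcases lt_or_ge x (p k) with h | h
        · exact Or.inl ⟨h0, h⟩
        · exact Or.inr ⟨h, h1⟩
      · rintro (⟨h0, h⟩ | ⟨h, h1⟩)
        · exact ⟨h0, h.trans (hp k).2⟩
        · exact ⟨(hp k).1.trans_le h, h1⟩
    have hdisj : Disjoint (Set.Ioo (0:ℝ) (p k)) (Set.Ico (p k) 1) := by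
      apply Set.disjoint_left.mpr
      rintro x ⟨_, hx2⟩ ⟨hx3, _⟩
      exact absurd hx3 (not_le.2 hx2)
    have hmaxint : Integrable (fun p' => max (q (p k) - q p') 0)
        (volume.restrict (Set.Ioo (0:ℝ) 1)) := ((integrable_const _).sub hqint).pos_part
    have hIco : Set.Ico (p k) 1 ⊆ Set.Ioo (0:ℝ) 1 := fun x hx =>
      ⟨(hp k).1.trans_le hx.1, hx.2⟩
    have husplit : ∫ p' in Set.Ioo (0:ℝ) 1, max (q (p k) - q p') 0 =
        (∫ p' in Set.Ioo (0:ℝ) (p k), max (q (p k) - q p') 0) +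
          ∫ p' in Set.Ico (p k) 1, max (q (p k) - q p') 0 := by
      rw [hsplit]
      exact setIntegral_union hdisj measurableSet_Ico
        (hmaxint.mono_measure (Measure.restrict_mono (hIk k) le_rfl))
        (hmaxint.mono_measure (Measure.restrict_mono hIco le_rfl))
    have hzero : ∫ p' in Set.Ico (p k) 1, max (q (p k) - q p') 0 = 0 := by
      rw [setIntegral_congr_fun measurableSet_Ico
        (g := fun _ => (0:ℝ)) (fun p' hp' => max_eq_right (sub_nonpos.2
          (hqmono (p k) (hp k) p' (hIco hp') hp'.1)))]
      simp
    have hfirst : ∫ p' in Set.Ioo (0:ℝ) (p k), max (q (p k) - q p') 0 =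
        ∫ p' in Set.Ioo (0:ℝ) (p k), (q (p k) - q p') := by
      refine setIntegral_congr_fun measurableSet_Ioo (fun p' hp' => max_eq_left (sub_nonneg.2 ?_))
      exact hqmono p' (hIk k hp') (p k) (hp k) hp'.2.le
    have h3 : ∫ p' in Set.Ioo (0:ℝ) (p k), (q (p k) - q p') =
        p k * q (p k) - ∫ p' in Set.Ioo (0:ℝ) (p k), q p' := by
      rw [integral_sub (integrable_const _) (hqIk k), hconstk k _]
    rw [husplit, hzero, hfirst, h3]
    ring
  -- rewriting the target
  have htarget : -∫ p' in (0:ℝ)..1, φ p' * q p' =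
      (∑ k, Δ k * ∫ p' in Set.Ioo (0:ℝ) (p k), q p') -
        φ 1 * ∫ p' in Set.Ioo (0:ℝ) 1, q p' := by
    rw [intervalIntegral.integral_of_le zero_le_one, integral_Ioc_eq_integral_Ioo]
    have hptw : ∀ p' ∈ Set.Ioo (0:ℝ) 1, φ p' * q p' =
        φ 1 * q p' - ∑ k, Set.indicator (Set.Iio (p k)) (fun x => Δ k * q x) p' := by
      intro p' hp'
      rw [hpc p' ⟨hp'.1.le, hp'.2.le⟩, sub_mul]
      congr 1
      rw [Finset.sum_mul, Finset.sum_filter]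
      refine Finset.sum_congr rfl fun k _ => ?_
      simp [Set.indicator_apply, ite_mul]
    rw [setIntegral_congr_fun measurableSet_Ioo hptw]
    have hint1 : Integrable (fun p' => φ 1 * q p') (volume.restrict (Set.Ioo (0:ℝ) 1)) :=
      hqint.const_mul _
    have hintk : ∀ k : Fin J, Integrable
        (fun p' => Set.indicator (Set.Iio (p k)) (fun x => Δ k * q x) p')
        (volume.restrict (Set.Ioo (0:ℝ) 1)) :=
      fun k => (hqint.const_mul (Δ k)).indicator measurableSet_Iio
    have hint2 : Integrable
        (fun p' => ∑ k, Set.indicator (Set.Iio (p k)) (fun x => Δ k * q x) p')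
        (volume.restrict (Set.Ioo (0:ℝ) 1)) :=
      integrable_finset_sum _ fun k _ => hintk k
    rw [integral_sub hint1 hint2, integral_finset_sum _ fun k _ => hintk k,
      integral_const_mul _ _, neg_sub]
    congr 1
    refine Finset.sum_congr rfl fun k _ => ?_
    rw [integral_indicator measurableSet_Iio, Measure.restrict_restrict measurableSet_Iio]
    have : Set.Iio (p k) ∩ Set.Ioo (0:ℝ) 1 = Set.Ioo 0 (p k) := by
      ext x
      simp only [Set.mem_inter_iff, Set.mem_Iio, Set.mem_Ioo]
      exact ⟨fun ⟨h1, h2, _⟩ => ⟨h2, h1⟩, fun ⟨h1, h2⟩ => ⟨h2, h1, h2.trans (hp k).2⟩⟩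
    rw [this, integral_const_mul]
  -- conclusion
  apply IsLeast.isGLB
  constructor
  · refine ⟨fun k => q (p k), ?_⟩
    simp only
    rw [htarget, hEX]
    congr 1
    exact Finset.sum_congr rfl fun k _ => by rw [heq k]
  · rintro y ⟨ψ, rfl⟩
    simp only
    rw [htarget, hEX]
    refine sub_le_sub_right (Finset.sum_le_sum fun k _ => ?_) _
    exact mul_le_mul_of_nonpos_left (hkey k (ψ k)) (hΔneg k)
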